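/- Let D_i ∈ B(X_i) for 1 ≤ i ≤ n with D_2, …, D_{n−1} inner regular. If T_n^d(A) is invertible for some choice of strictly upper entries A, then N(D_2) × ⋯ × N(D_n) is linearly isomorphic to X_1/R(D_1) × ⋯ × X_{n−1}/R(D_{n−1}). -/

import Mathlib

section helpers


universe u v

lemma tri_bijective (m : ℕ) :
    ∀ (Y : Fin m → Type u) (Z : Fin m → Type v)
      [∀ i, AddCommGroup (Y i)] [∀ i, Module ℝ (Y i)]
      [∀ i, AddCommGroup (Z i)] [∀ i, Module ℝ (Z i)]
      (L : (∀ i, Y i) →ₗ[ℝ] ∀ i, Z i) (d : ∀ i, Y i →ₗ[ℝ] Z i),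
      (∀ i, Function.Bijective (d i)) →
      (∀ x y (i : Fin m), (∀ j, i < j → x j = y j) →
        L x i - d i (x i) = L y i - d i (y i)) →
      Function.Bijective L := by
  induction m with
  | zero =>
    intro Y Z _ _ _ _ L d hd hL
    constructor
    · intro a b _
      funext i; exact i.elim0
    · intro z
      exact ⟨fun i => i.elim0, funext fun i => i.elim0⟩
  | succ m ih =>
    intro Y Z _ _ _ _ L d hd hL
    let cons0 : (∀ i : Fin m, Y i.succ) →ₗ[ℝ] (∀ i, Y i) :=
      { toFun := fun x => Fin.cons 0 x
        map_add' := by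
          intro a b; funext j
          refine Fin.cases ?_ ?_ j <;> simp
        map_smul' := by
          intro c a; funext j
          refine Fin.cases ?_ ?_ j <;> simp }
    let tailZ : (∀ i, Z i) →ₗ[ℝ] (∀ i : Fin m, Z i.succ) :=
      LinearMap.pi (fun i => LinearMap.proj i.succ)
    let L' := tailZ ∘ₗ L ∘ₗ cons0
    have hL'app : ∀ x i, L' x i = L (Fin.cons 0 x) i.succ := fun _ _ => rfl
    -- key: L x at succ indices depends only on the tail of x
    have key : ∀ (x : ∀ i, Y i) (i : Fin m),
        L x i.succ = L (Fin.cons 0 (Fin.tail x)) i.succ := by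
      intro x i
      have h := hL x (Fin.cons 0 (Fin.tail x)) i.succ (by
        intro j hj
        have hj0 : j ≠ 0 := by
          intro h0; rw [h0] at hj; exact (Fin.not_lt_zero _) hj
        obtain ⟨k, rfl⟩ := Fin.eq_succ_of_ne_zero hj0
        simp [Fin.tail])
      have hx : (Fin.cons 0 (Fin.tail x) : ∀ i, Y i) i.succ = x i.succ := by
        simp [Fin.tail]
      rw [hx] at h
      exact sub_left_inj.mp h
    -- L' satisfies the hypotheses
    have hL'bij : Function.Bijective L' := by
      refine ih _ _ L' (fun i => d i.succ) (fun i => hd i.succ) ?_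
      intro x y i hxy
      have := hL (Fin.cons 0 x) (Fin.cons 0 y) i.succ (by
        intro j hj
        have hj0 : j ≠ 0 := by
          intro h0; rw [h0] at hj; exact (Fin.not_lt_zero _) hj
        obtain ⟨k, rfl⟩ := Fin.eq_succ_of_ne_zero hj0
        have : i < k := by
          rwa [Fin.succ_lt_succ_iff] at hj
        simpa using hxy k this)
      simpa [hL'app, Fin.cons_succ] using this
    constructor
    · rw [injective_iff_map_eq_zero]
      intro x hx
      have htail : Fin.tail x = 0 := by
        apply hL'bij.injective
        rw [map_zero]
        funext i
        rw [hL'app, ← key, hx]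
        simp
      have h0 : x 0 = 0 := by
        have h := hL x 0 0 (by
          intro j hj
          have hj0 : j ≠ 0 := by
            intro h0; rw [h0] at hj; exact (Fin.not_lt_zero _) hj
          obtain ⟨k, rfl⟩ := Fin.eq_succ_of_ne_zero hj0
          have : Fin.tail x k = 0 := by rw [htail]; rfl
          simpa [Fin.tail] using this)
        rw [hx] at h
        simp only [Pi.zero_apply, map_zero, zero_sub, neg_inj] at h
        exact (hd 0).injective (by simpa using h)
      funext j
      refine Fin.cases ?_ ?_ j
      · exact h0
      · intro k
        have : Fin.tail x k = 0 := by rw [htail]; rfl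
        simpa [Fin.tail] using this
    · intro z
      obtain ⟨t, ht⟩ := hL'bij.surjective (fun i => z i.succ)
      obtain ⟨a, ha⟩ := (hd 0).surjective (z 0 - L (Fin.cons 0 t) 0)
      refine ⟨Fin.cons a t, ?_⟩
      funext j
      refine Fin.cases ?_ ?_ j
      · have h := hL (Fin.cons a t) (Fin.cons 0 t) 0 (by
          intro j hj
          have hj0 : j ≠ 0 := by
            intro h0; rw [h0] at hj; exact (Fin.not_lt_zero _) hj
          obtain ⟨k, rfl⟩ := Fin.eq_succ_of_ne_zero hj0
          simp)
        simp only [Fin.cons_zero, map_zero, sub_zero] at h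
        have : L (Fin.cons a t) 0 = d 0 a + L (Fin.cons 0 t) 0 := by
          rw [sub_eq_iff_eq_add] at h
          rw [h]; abel
        rw [this, ha]; abel
      · intro k
        have h1 : L (Fin.cons a t) k.succ = L (Fin.cons 0 (Fin.tail (Fin.cons a t))) k.succ :=
          key _ k
        have h2 : Fin.tail (Fin.cons a t) = t := by
          funext i; simp [Fin.tail]
        rw [h1, h2, ← hL'app, ht]


lemma schur_bijective {M N R S : Type*}
    [AddCommGroup M] [Module ℝ M] [AddCommGroup N] [Module ℝ N]
    [AddCommGroup R] [Module ℝ R] [AddCommGroup S] [Module ℝ S]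
    (T : (M × N) →ₗ[ℝ] (R × S)) (hT : Function.Bijective T)
    (eα : M ≃ₗ[ℝ] R) (hα : ∀ m : M, (T (m, 0)).1 = eα m)
    (σ : N →ₗ[ℝ] S)
    (hσ : ∀ nn : N, σ nn = (T (0, nn)).2 - (T (eα.symm ((T (0, nn)).1), 0)).2) :
    Function.Bijective σ := by
  set β : N → R := fun nn => (T (0, nn)).1 with hβ
  set γ : M → S := fun mm => (T (mm, 0)).2 with hγ
  have hTsplit : ∀ (mm : M) (nn : N), T (mm, nn) = T (mm, 0) + T (0, nn) := by
    intro mm nn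
    rw [← map_add]
    congr 1
    simp
  -- the bijection F p = (eα p.1, σ p.2)
  have hF : Function.Bijective (fun p : M × N => (eα p.1, σ p.2)) := by
    have hg : Function.Bijective (fun p : M × N => (p.1 - eα.symm (β p.2), p.2)) := by
      constructor
      · intro p q hpq
        simp only [Prod.mk.injEq] at hpq
        obtain ⟨h1, h2⟩ := hpq
        rw [h2] at h1
        have := sub_left_inj.mp h1
        exact Prod.ext this h2
      · intro p
        exact ⟨(p.1 + eα.symm (β p.2), p.2), by simp⟩
    have hh : Function.Bijective (fun q : R × S => (q.1, q.2 - γ (eα.symm q.1))) := by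
      constructor
      · intro p q hpq
        simp only [Prod.mk.injEq] at hpq
        obtain ⟨h1, h2⟩ := hpq
        rw [h1] at h2
        exact Prod.ext h1 (sub_left_inj.mp h2)
      · intro p
        exact ⟨(p.1, p.2 + γ (eα.symm p.1)), by simp⟩
    have hcomp : (fun p : M × N => (eα p.1, σ p.2)) =
        (fun q : R × S => (q.1, q.2 - γ (eα.symm q.1))) ∘ T ∘
        (fun p : M × N => (p.1 - eα.symm (β p.2), p.2)) := by
      funext p
      obtain ⟨mm, nn⟩ := p
      simp only [Function.comp_apply]
      have h1 : T (mm - eα.symm (β nn), nn)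
          = T (mm, 0) - T (eα.symm (β nn), 0) + T (0, nn) := by
        rw [hTsplit (mm - eα.symm (β nn)) nn, ← map_sub]
        congr 2
        simp
      rw [h1]
      have hfst : (T (mm, 0) - T (eα.symm (β nn), 0) + T (0, nn)).1 = eα mm := by
        simp only [Prod.fst_add, Prod.fst_sub]
        rw [hα, hα]
        simp [hβ]
      apply Prod.ext
      · simpa using hfst.symm
      · simp only [Prod.snd_add, Prod.snd_sub]
        rw [hfst]
        rw [hσ nn]
        simp only [LinearEquiv.symm_apply_apply]
        have : γ mm = (T (mm, 0)).2 := rfl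
        simp only [hγ, hβ]
        abel
    rw [hcomp]
    exact hh.comp (hT.comp hg)
  constructor
  · intro a b hab
    have := hF.injective (a₁ := ((0 : M), a)) (a₂ := ((0 : M), b))
      (by simp only [Prod.mk.injEq]; exact ⟨trivial, hab⟩)
    simpa using this
  · intro s
    obtain ⟨p, hp⟩ := hF.surjective (eα 0, s)
    simp only [Prod.mk.injEq] at hp
    exact ⟨p.2, hp.2⟩



def dropZeroEquiv {n : ℕ} (Y : Fin (n + 1) → Type u)
    [∀ i, AddCommGroup (Y i)] [∀ i, Module ℝ (Y i)]
    (h0 : Subsingleton (Y 0)) : (∀ i, Y i) ≃ₗ[ℝ] ∀ i : Fin n, Y i.succ where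
  toFun x i := x i.succ
  invFun x := Fin.cons 0 x
  map_add' a b := rfl
  map_smul' c a := rfl
  left_inv x := by
    funext j
    refine Fin.cases ?_ ?_ j
    · exact Subsingleton.elim _ _
    · intro k; simp
  right_inv x := by funext i; simp

def dropLastEquiv {n : ℕ} (Y : Fin (n + 1) → Type u)
    [∀ i, AddCommGroup (Y i)] [∀ i, Module ℝ (Y i)]
    (hl : Subsingleton (Y (Fin.last n))) : (∀ i, Y i) ≃ₗ[ℝ] ∀ i : Fin n, Y i.castSucc where
  toFun x i := x i.castSucc
  invFun x := Fin.snoc x 0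
  map_add' a b := rfl
  map_smul' c a := rfl
  left_inv x := by
    funext j
    refine Fin.lastCases ?_ ?_ j
    · exact Subsingleton.elim _ _
    · intro k; simp
  right_inv x := by funext i; simp

end helpers

/-- An operator between (semi)normed spaces is invertible if it has a bounded two-sided
inverse. -/
def IsInvertibleCLM {U V : Type*} [SeminormedAddCommGroup U] [NormedSpace ℝ U]
    [SeminormedAddCommGroup V] [NormedSpace ℝ V] (T : U →L[ℝ] V) : Prop :=
  ∃ T' : V →L[ℝ] U, T'.comp T = ContinuousLinearMap.id ℝ U ∧
    T.comp T' = ContinuousLinearMap.id ℝ V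

set_option maxHeartbeats 2000000 in
/-- If some choice of strictly upper entries `A` makes the `n × n` upper triangular operator
matrix with diagonal `D_1, …, D_n` (the middle ones inner regular) invertible, then
`N(D_2) × ⋯ × N(D_n)` is linearly isomorphic to `X_1/R(D_1) × ⋯ × X_{n-1}/R(D_{n-1})`. -/
theorem nbyn_necessary_iso {n : ℕ} {X : Fin (n + 1) → Type*}
    [∀ i, NormedAddCommGroup (X i)] [∀ i, NormedSpace ℝ (X i)] [∀ i, CompleteSpace (X i)]
    (D : ∀ i, X i →L[ℝ] X i)
    (hreg : ∀ i, i ≠ 0 → i ≠ Fin.last n → ∃ D' : X i →L[ℝ] X i,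
      (D i).comp (D'.comp (D i)) = D i)
    (h : ∃ (A : ∀ i j : Fin (n + 1), X j →L[ℝ] X i)
        (T : (∀ i, X i) →L[ℝ] (∀ i, X i)),
      (∀ (f : ∀ i, X i) (i : Fin (n + 1)),
        T f i = D i (f i) + ∑ j ∈ Finset.univ.filter (fun j => i < j), A i j (f j)) ∧
      IsInvertibleCLM T) :
    Nonempty ((∀ i : Fin n, ↥(LinearMap.ker (D i.succ : X i.succ →ₗ[ℝ] X i.succ)))
      ≃ₗ[ℝ] (∀ i : Fin n, (X i.castSucc ⧸ LinearMap.range (D i.castSucc : X i.castSucc →ₗ[ℝ] X i.castSucc)))) := by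
  obtain ⟨A, T, hTdef, T', hl, hr⟩ := h
  have hTl : ∀ f, T' (T f) = f := by
    intro f
    have := ContinuousLinearMap.ext_iff.mp hl f
    simpa using this
  have hTr : ∀ f, T (T' f) = f := by
    intro f
    have := ContinuousLinearMap.ext_iff.mp hr f
    simpa using this
  have hTbij : Function.Bijective T :=
    ⟨fun a b hab => by rw [← hTl a, hab, hTl], fun y => ⟨T' y, hTr y⟩⟩
  -- T on a single-coordinate-0 vector
  have hsingle0 : ∀ x : X 0, T (Pi.single 0 x) = Pi.single 0 (D 0 x) := by
    intro x
    funext j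
    rw [hTdef]
    have hsum : (∑ j' ∈ Finset.univ.filter (fun j' => j < j'), A j j' (Pi.single 0 x j')) = 0 := by
      refine Finset.sum_eq_zero fun j' hj' => ?_
      have hlt : j < j' := (Finset.mem_filter.mp hj').2
      have hne : j' ≠ 0 := by
        rintro rfl; exact (Fin.not_lt_zero j) hlt
      rw [Pi.single_eq_of_ne hne, map_zero]
    rw [hsum, add_zero]
    by_cases hj : j = 0
    · subst hj; rw [Pi.single_eq_same, Pi.single_eq_same]
    · rw [Pi.single_eq_of_ne hj, Pi.single_eq_of_ne hj, map_zero]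
  -- T at the last coordinate
  have hlast : ∀ f, T f (Fin.last n) = D (Fin.last n) (f (Fin.last n)) := by
    intro f
    rw [hTdef]
    have hsum : (∑ j' ∈ Finset.univ.filter (fun j' => Fin.last n < j'),
        A (Fin.last n) j' (f j')) = 0 := by
      refine Finset.sum_eq_zero fun j' hj' => ?_
      exact absurd (Finset.mem_filter.mp hj').2 (Fin.le_last j').not_gt
    rw [hsum, add_zero]
  -- generalized inverses
  have hginv : ∀ i : Fin (n+1), ∃ g : X i →ₗ[ℝ] X i,
      (∀ x, D i (g (D i x)) = D i x) ∧ (i = 0 → ∀ x, g (D i x) = x) ∧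
      (i = Fin.last n → ∀ x, D i (g x) = x) := by
    intro i
    by_cases hi0 : i = 0
    · subst hi0
      refine ⟨(LinearMap.proj 0) ∘ₗ (T' : (∀ k, X k) →ₗ[ℝ] ∀ k, X k) ∘ₗ
        (LinearMap.single ℝ X 0), ?_, ?_, ?_⟩
      · intro x
        have : T' (T (Pi.single 0 x)) = Pi.single 0 x := hTl _
        simp only [LinearMap.coe_comp, Function.comp_apply, LinearMap.coe_single,
          LinearMap.proj_apply, ContinuousLinearMap.coe_coe]
        rw [← hsingle0, this, Pi.single_eq_same]
      · intro _ x
        simp only [LinearMap.coe_comp, Function.comp_apply, LinearMap.coe_single,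
          LinearMap.proj_apply, ContinuousLinearMap.coe_coe]
        rw [← hsingle0, hTl, Pi.single_eq_same]
      · intro h0 x
        -- here 0 = last, so T f 0 = D 0 (f 0)
        have hT0 : ∀ f, T f 0 = D 0 (f 0) := by
          intro f
          rw [hTdef]
          have hsum : (∑ j' ∈ Finset.univ.filter (fun j' => (0 : Fin (n+1)) < j'),
              A 0 j' (f j')) = 0 := by
            refine Finset.sum_eq_zero fun j' hj' => ?_
            have hlt := (Finset.mem_filter.mp hj').2
            have : j' ≤ 0 := h0 ▸ Fin.le_last j'
            exact absurd hlt this.not_gt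
          rw [hsum, add_zero]
        simp only [LinearMap.coe_comp, Function.comp_apply, LinearMap.coe_single,
          LinearMap.proj_apply, ContinuousLinearMap.coe_coe]
        rw [← hT0 (T' (Pi.single 0 x)), hTr, Pi.single_eq_same]
    · by_cases hil : i = Fin.last n
      · subst hil
        refine ⟨(LinearMap.proj (Fin.last n)) ∘ₗ (T' : (∀ k, X k) →ₗ[ℝ] ∀ k, X k) ∘ₗ
          (LinearMap.single ℝ X (Fin.last n)), ?_, ?_, ?_⟩
        · intro x
          simp only [LinearMap.coe_comp, Function.comp_apply, LinearMap.coe_single,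
            LinearMap.proj_apply, ContinuousLinearMap.coe_coe]
          rw [← hlast (T' (Pi.single (Fin.last n) (D (Fin.last n) x))), hTr, Pi.single_eq_same]
        · intro h0; exact absurd h0 hi0
        · intro _ x
          simp only [LinearMap.coe_comp, Function.comp_apply, LinearMap.coe_single,
            LinearMap.proj_apply, ContinuousLinearMap.coe_coe]
          rw [← hlast (T' (Pi.single (Fin.last n) x)), hTr, Pi.single_eq_same]
      · obtain ⟨D', hD'⟩ := hreg i hi0 hil
        refine ⟨(D' : X i →ₗ[ℝ] X i), ?_, fun h0 => absurd h0 hi0, fun hL => absurd hL hil⟩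
        intro x
        have := ContinuousLinearMap.ext_iff.mp hD' x
        simpa using this
  choose g hg1 hg2 hg3 using hginv
  -- projections
  set Qm : ∀ i, X i →ₗ[ℝ] X i := fun i => (g i) ∘ₗ ((D i : X i →ₗ[ℝ] X i)) with hQm
  set Pm : ∀ i, X i →ₗ[ℝ] X i := fun i => ((D i : X i →ₗ[ℝ] X i)) ∘ₗ (g i) with hPm
  have hQapp : ∀ i x, Qm i x = g i (D i x) := fun i x => rfl
  have hPapp : ∀ i x, Pm i x = D i (g i x) := fun i x => rfl
  have hDQ : ∀ i x, D i (Qm i x) = D i x := fun i x => hg1 i x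
  have hPD : ∀ i x, Pm i (D i x) = D i x := fun i x => hg1 i x
  have hQidem : ∀ i x, Qm i (Qm i x) = Qm i x := by
    intro i x
    show g i (D i (g i (D i x))) = g i (D i x)
    rw [hg1]
  -- submodules
  set Nsub : ∀ i, Submodule ℝ (X i) := fun i => LinearMap.ker (D i : X i →ₗ[ℝ] X i) with hNsub
  set Rsub : ∀ i, Submodule ℝ (X i) := fun i => LinearMap.range (D i : X i →ₗ[ℝ] X i) with hRsub
  set Msub : ∀ i, Submodule ℝ (X i) := fun i => LinearMap.range (Qm i) with hMsub
  set Ssub : ∀ i, Submodule ℝ (X i) := fun i => LinearMap.ker (Pm i) with hSsub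
  have hMfix : ∀ i (a : X i), a ∈ Msub i → Qm i a = a := by
    intro i a ha
    obtain ⟨x, rfl⟩ := LinearMap.mem_range.mp ha
    exact hQidem i x
  have hRfix : ∀ i (a : X i), a ∈ Rsub i → Pm i a = a := by
    intro i a ha
    obtain ⟨x, rfl⟩ := LinearMap.mem_range.mp ha
    exact hPD i x
  have hQzero : ∀ i (a : X i), a ∈ Nsub i → Qm i a = 0 := by
    intro i a ha
    rw [hQapp, (id (LinearMap.mem_ker.mp ha) : D i a = 0), map_zero]
  have hPmem : ∀ i (x : X i), Pm i x ∈ Rsub i := by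
    intro i x; exact LinearMap.mem_range.mpr ⟨g i x, rfl⟩
  -- decomposition equivalences
  set Φ : ((∀ i, ↥(Msub i)) × (∀ i, ↥(Nsub i))) ≃ₗ[ℝ] (∀ i, X i) :=
    { toFun := fun p => fun i => (p.1 i : X i) + (p.2 i : X i)
      invFun := fun y =>
        (fun i => ⟨Qm i (y i), LinearMap.mem_range.mpr ⟨y i, rfl⟩⟩,
         fun i => ⟨y i - Qm i (y i), LinearMap.mem_ker.mpr (by
            rw [map_sub, ContinuousLinearMap.coe_coe, hDQ, sub_self])⟩)
      map_add' := by
        intro a b; funext i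
        simp only [Prod.fst_add, Prod.snd_add, Pi.add_apply, Submodule.coe_add]
        abel
      map_smul' := by
        intro c a; funext i
        simp only [Prod.smul_fst, Prod.smul_snd, Pi.smul_apply, SetLike.val_smul,
          RingHom.id_apply]
        rw [smul_add]
      left_inv := by
        intro p
        refine Prod.ext ?_ ?_
        · funext i
          refine Subtype.ext ?_
          show Qm i ((p.1 i : X i) + (p.2 i : X i)) = (p.1 i : X i)
          rw [map_add, hMfix i _ (p.1 i).2, hQzero i _ (p.2 i).2, add_zero]
        · funext i
          refine Subtype.ext ?_
          show ((p.1 i : X i) + (p.2 i : X i)) - Qm i ((p.1 i : X i) + (p.2 i : X i))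
              = (p.2 i : X i)
          rw [map_add, hMfix i _ (p.1 i).2, hQzero i _ (p.2 i).2, add_zero]
          abel
      right_inv := by
        intro y; funext i
        show Qm i (y i) + (y i - Qm i (y i)) = y i
        abel } with hΦdef
  set Ψ : ((∀ i, ↥(Rsub i)) × (∀ i, ↥(Ssub i))) ≃ₗ[ℝ] (∀ i, X i) :=
    { toFun := fun p => fun i => (p.1 i : X i) + (p.2 i : X i)
      invFun := fun y =>
        (fun i => ⟨Pm i (y i), hPmem i (y i)⟩,
         fun i => ⟨y i - Pm i (y i), LinearMap.mem_ker.mpr (by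
            rw [map_sub, hRfix i _ (hPmem i (y i)), sub_self])⟩)
      map_add' := by
        intro a b; funext i
        simp only [Prod.fst_add, Prod.snd_add, Pi.add_apply, Submodule.coe_add]
        abel
      map_smul' := by
        intro c a; funext i
        simp only [Prod.smul_fst, Prod.smul_snd, Pi.smul_apply, SetLike.val_smul,
          RingHom.id_apply]
        rw [smul_add]
      left_inv := by
        intro p
        refine Prod.ext ?_ ?_
        · funext i
          refine Subtype.ext ?_
          show Pm i ((p.1 i : X i) + (p.2 i : X i)) = (p.1 i : X i)
          rw [map_add, hRfix i _ (p.1 i).2, LinearMap.mem_ker.mp (p.2 i).2, add_zero]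
        · funext i
          refine Subtype.ext ?_
          show ((p.1 i : X i) + (p.2 i : X i)) - Pm i ((p.1 i : X i) + (p.2 i : X i))
              = (p.2 i : X i)
          rw [map_add, hRfix i _ (p.1 i).2, LinearMap.mem_ker.mp (p.2 i).2, add_zero]
          abel
      right_inv := by
        intro y; funext i
        show Pm i (y i) + (y i - Pm i (y i)) = y i
        abel } with hΨdef
  -- the transported operator
  set That : ((∀ i, ↥(Msub i)) × (∀ i, ↥(Nsub i))) →ₗ[ℝ]
      ((∀ i, ↥(Rsub i)) × (∀ i, ↥(Ssub i))) :=
    Ψ.symm.toLinearMap ∘ₗ (T : (∀ i, X i) →ₗ[ℝ] ∀ i, X i) ∘ₗ Φ.toLinearMap with hThat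
  have hThatbij : Function.Bijective That := by
    have : ⇑That = ⇑Ψ.symm ∘ ⇑T ∘ ⇑Φ := rfl
    rw [this]
    exact Ψ.symm.bijective.comp (hTbij.comp Φ.bijective)
  -- the corner map α
  set αL : (∀ i, ↥(Msub i)) →ₗ[ℝ] (∀ i, ↥(Rsub i)) :=
    (LinearMap.fst ℝ _ _) ∘ₗ That ∘ₗ (LinearMap.inl ℝ _ _) with hαL
  have hΦm : ∀ m : ∀ i, ↥(Msub i), Φ ((m, 0) : _ × (∀ i, ↥(Nsub i))) =
      fun k => (m k : X k) := by
    intro m; funext k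
    show (m k : X k) + ((0 : ∀ i, ↥(Nsub i)) k : X k) = (m k : X k)
    simp
  have hαapp : ∀ (m : ∀ i, ↥(Msub i)) i,
      ((αL m i : X i)) = Pm i (T (fun k => (m k : X k)) i) := by
    intro m i
    show Pm i (T (Φ ((m, 0) : _ × (∀ i, ↥(Nsub i)))) i) = _
    rw [hΦm m]
  -- diagonal maps
  set d : ∀ i, ↥(Msub i) →ₗ[ℝ] ↥(Rsub i) := fun i =>
    LinearMap.codRestrict (Rsub i) (((D i : X i →ₗ[ℝ] X i)).domRestrict (Msub i))
      (fun c => LinearMap.mem_range.mpr ⟨(c : X i), rfl⟩) with hd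
  have hdapp : ∀ i (a : ↥(Msub i)), ((d i a : X i)) = D i (a : X i) := fun i a => rfl
  have hdbij : ∀ i, Function.Bijective (d i) := by
    intro i
    constructor
    · intro a b hab
      have hv : D i (a : X i) = D i (b : X i) := by
        have := congrArg (Subtype.val) hab
        rwa [hdapp, hdapp] at this
      refine Subtype.ext ?_
      rw [← hMfix i _ a.2, ← hMfix i _ b.2, hQapp, hQapp, hv]
    · rintro ⟨r, hr⟩
      obtain ⟨x, rfl⟩ := LinearMap.mem_range.mp hr
      refine ⟨⟨Qm i x, LinearMap.mem_range.mpr ⟨x, rfl⟩⟩, ?_⟩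
      refine Subtype.ext ?_
      rw [hdapp]
      exact hDQ i x
  -- α is triangular with bijective diagonal
  have hαbij : Function.Bijective αL := by
    refine tri_bijective (n+1) _ _ αL d hdbij ?_
    intro x y i hxy
    refine Subtype.ext ?_
    rw [Submodule.coe_sub, Submodule.coe_sub, hαapp, hαapp, hdapp, hdapp]
    rw [hTdef, hTdef]
    rw [map_add, map_add, hPD, hPD]
    have hxyv : ∀ j, i < j → ((x j : X j)) = ((y j : X j)) := by
      intro j hj; rw [hxy j hj]
    have hsumeq : (∑ j ∈ Finset.univ.filter (fun j => i < j), (A i j) ((x j : X j)))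
        = ∑ j ∈ Finset.univ.filter (fun j => i < j), (A i j) ((y j : X j)) :=
      Finset.sum_congr rfl fun j hj => by rw [hxyv j (Finset.mem_filter.mp hj).2]
    rw [hsumeq]
    abel
  set eα : (∀ i, ↥(Msub i)) ≃ₗ[ℝ] (∀ i, ↥(Rsub i)) := LinearEquiv.ofBijective αL hαbij
    with heα
  have hα : ∀ m, (That (m, 0)).1 = eα m := fun m => rfl
  -- the Schur complement
  set σL : (∀ i, ↥(Nsub i)) →ₗ[ℝ] (∀ i, ↥(Ssub i)) :=
    (LinearMap.snd ℝ _ _) ∘ₗ That ∘ₗ (LinearMap.inr ℝ _ _) -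
    ((LinearMap.snd ℝ _ _) ∘ₗ That ∘ₗ (LinearMap.inl ℝ _ _)) ∘ₗ eα.symm.toLinearMap ∘ₗ
      ((LinearMap.fst ℝ _ _) ∘ₗ That ∘ₗ (LinearMap.inr ℝ _ _)) with hσL
  have hσ : ∀ nn, σL nn = (That (0, nn)).2 - (That (eα.symm ((That (0, nn)).1), 0)).2 :=
    fun nn => rfl
  have hσbij : Function.Bijective σL := schur_bijective That hThatbij eα hα σL hσ
  -- endpoint degeneracies
  have sN0 : Subsingleton ↥(Nsub 0) := by
    refine ⟨fun a b => Subtype.ext ?_⟩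
    have ha : (a : X 0) = 0 := by
      have := hg2 0 rfl (a : X 0)
      rw [(id (LinearMap.mem_ker.mp a.2) : D 0 (a : X 0) = 0), map_zero] at this
      exact this.symm
    have hb : (b : X 0) = 0 := by
      have := hg2 0 rfl (b : X 0)
      rw [(id (LinearMap.mem_ker.mp b.2) : D 0 (b : X 0) = 0), map_zero] at this
      exact this.symm
    rw [ha, hb]
  have sSlast : Subsingleton ↥(Ssub (Fin.last n)) := by
    refine ⟨fun a b => Subtype.ext ?_⟩
    have ha : (a : X (Fin.last n)) = 0 := by
      have h1 := LinearMap.mem_ker.mp a.2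
      rw [hPapp] at h1
      rw [← hg3 (Fin.last n) rfl (a : X (Fin.last n))]
      exact h1
    have hb : (b : X (Fin.last n)) = 0 := by
      have h1 := LinearMap.mem_ker.mp b.2
      rw [hPapp] at h1
      rw [← hg3 (Fin.last n) rfl (b : X (Fin.last n))]
      exact h1
    rw [ha, hb]
  -- complementarity of range and S
  have hcompl : ∀ i, IsCompl (Rsub i) (Ssub i) := by
    intro i
    constructor
    · rw [disjoint_iff_inf_le]
      rintro x ⟨hx1, hx2⟩
      have := hRfix i x hx1
      rw [LinearMap.mem_ker.mp hx2] at this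
      simp [← this]
    · rw [codisjoint_iff_le_sup]
      intro x _
      refine Submodule.mem_sup.mpr ⟨Pm i x, hPmem i x, x - Pm i x, ?_, by abel⟩
      refine LinearMap.mem_ker.mpr ?_
      rw [map_sub, hRfix i _ (hPmem i x), sub_self]
  -- assemble
  refine ⟨?_⟩
  exact (dropZeroEquiv (fun i => ↥(Nsub i)) sN0).symm ≪≫ₗ
    (LinearEquiv.ofBijective σL hσbij) ≪≫ₗ
    (dropLastEquiv (fun i => ↥(Ssub i)) sSlast) ≪≫ₗ
    (LinearEquiv.piCongrRight fun i =>
      (Submodule.quotientEquivOfIsCompl (Rsub i.castSucc) (Ssub i.castSucc)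
        (hcompl i.castSucc)).symm)
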